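/- Dominating pair of datasets for the without-replacement subsampled Gaussian mechanism under the add relation: let σ > 0, let n, b be integers with 1 ≤ b ≤ n−1, and set γ := b/n. For every tuple D ∈ [−1,1]^{n−1} and every D' ∈ [−1,1]^n obtained from D by inserting one additional entry from [−1,1], and every α ≥ 0, H_α(M_{n−1,b}(D) ‖ M_{n,b}(D')) ≤ H_α(N(−b,σ²) ‖ (1−γ)·N(−b,σ²) + γ·N(2−b,σ²)). Moreover this bound is realized: for D = (−1,…,−1) of length n−1 and D' = (−1,…,−1,1) of length n, M_{n−1,b}(D) = N(−b,σ²) and M_{n,b}(D') = (1−γ)·N(−b,σ²) + γ·N(2−b,σ²). -/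

import Mathlib

open MeasureTheory ProbabilityTheory
open scoped ENNReal NNReal

/-- Hockey-stick divergence: `H_α(P ‖ Q) = sup_{E measurable} (P(E) − α·Q(E))`. -/
noncomputable def hsDiv {X : Type*} [MeasurableSpace X] (α : ℝ) (P Q : Measure X) : ℝ :=
  ⨆ E : {E : Set X // MeasurableSet E}, ((P E).toReal - α * (Q E).toReal)

/-- The without-replacement subsampled Gaussian mechanism:
`M_{m,b}(x) = binom(m,b)⁻¹ ∑_{S ⊆ [m], |S| = b} N(∑_{i∈S} x_i, σ²)`. -/
noncomputable def worGauss (σ : ℝ) (b : ℕ) {m : ℕ} (x : Fin m → ℝ) : Measure ℝ :=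
  ((m.choose b : ℝ≥0∞))⁻¹ •
    ∑ S ∈ Finset.powersetCard b (Finset.univ : Finset (Fin m)),
      gaussianReal (∑ i ∈ S, x i) ⟨σ ^ 2, sq_nonneg σ⟩


open Finset Real

section Aux

lemma not_mem_map_succAboveEmb {m : ℕ} (i : Fin (m+1)) (S : Finset (Fin m)) :
    i ∉ S.map (i.succAboveEmb) := by
  simp only [Finset.mem_map, Fin.succAboveEmb_apply]
  rintro ⟨a, -, ha⟩
  exact i.succAbove_ne a ha

lemma map_preimage_succAbove {m : ℕ} (i : Fin (m+1)) (T : Finset (Fin (m+1))) (hT : i ∉ T) :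
    (T.preimage i.succAbove (Fin.succAbove_right_injective (p := i)).injOn).map (i.succAboveEmb)
      = T := by
  ext k
  simp only [Finset.mem_map, Finset.mem_preimage, Fin.succAboveEmb_apply]
  constructor
  · rintro ⟨a, ha, rfl⟩; exact ha
  · intro hk
    obtain ⟨a, rfl⟩ := i.exists_succAbove_eq (x := k) (by rintro rfl; exact hT hk)
    exact ⟨a, hk, rfl⟩

lemma sum_powersetCard_split {M : Type*} [AddCommMonoid M] (m b : ℕ) (hb : 1 ≤ b)
    (i : Fin (m+1)) (f : Finset (Fin (m+1)) → M) :
    ∑ T ∈ Finset.powersetCard b (Finset.univ : Finset (Fin (m+1))), f T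
      = (∑ S ∈ Finset.powersetCard b (Finset.univ : Finset (Fin m)), f (S.map (i.succAboveEmb)))
      + ∑ S ∈ Finset.powersetCard (b-1) (Finset.univ : Finset (Fin m)),
          f (insert i (S.map (i.succAboveEmb))) := by
  classical
  rw [← Finset.sum_filter_add_sum_filter_not (Finset.powersetCard b Finset.univ) (fun T => i ∉ T)]
  congr 1
  · refine Finset.sum_nbij'
      (fun T => T.preimage i.succAbove (Fin.succAbove_right_injective (p := i)).injOn)
      (fun S => S.map (i.succAboveEmb)) ?_ ?_ ?_ ?_ ?_
    · intro T hT
      simp only [Finset.mem_filter, Finset.mem_powersetCard_univ] at hT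
      rw [Finset.mem_powersetCard_univ, ← Finset.card_map (i.succAboveEmb),
        map_preimage_succAbove i T hT.2, hT.1]
    · intro S hS
      simp only [Finset.mem_filter, Finset.mem_powersetCard_univ] at hS ⊢
      exact ⟨by rw [Finset.card_map, hS], not_mem_map_succAboveEmb i S⟩
    · intro T hT
      simp only [Finset.mem_filter] at hT
      exact map_preimage_succAbove i T hT.2
    · intro S hS
      exact Finset.preimage_map _ _
    · intro T hT
      simp only [Finset.mem_filter] at hT
      rw [map_preimage_succAbove i T hT.2]
  · refine Finset.sum_nbij'
      (fun T => (T.erase i).preimage i.succAbove (Fin.succAbove_right_injective (p := i)).injOn)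
      (fun S => insert i (S.map (i.succAboveEmb))) ?_ ?_ ?_ ?_ ?_
    · intro T hT
      simp only [Finset.mem_filter, Finset.mem_powersetCard_univ, not_not] at hT
      rw [Finset.mem_powersetCard_univ, ← Finset.card_map (i.succAboveEmb),
        map_preimage_succAbove i _ (Finset.notMem_erase i T),
        Finset.card_erase_of_mem hT.2, hT.1]
    · intro S hS
      simp only [Finset.mem_filter, Finset.mem_powersetCard_univ, not_not] at hS ⊢
      refine ⟨?_, Finset.mem_insert_self i _⟩
      rw [Finset.card_insert_of_notMem (not_mem_map_succAboveEmb i S), Finset.card_map, hS]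
      omega
    · intro T hT
      simp only [Finset.mem_filter, Finset.mem_powersetCard_univ, not_not] at hT
      rw [map_preimage_succAbove i _ (Finset.notMem_erase i T), Finset.insert_erase hT.2]
    · intro S hS
      rw [Finset.erase_insert (not_mem_map_succAboveEmb i S)]
      exact Finset.preimage_map _ _
    · intro T hT
      simp only [Finset.mem_filter, Finset.mem_powersetCard_univ, not_not] at hT
      rw [map_preimage_succAbove i _ (Finset.notMem_erase i T), Finset.insert_erase hT.2]

-- choose identities
lemma choose_id1 (m b : ℕ) (hb1 : 1 ≤ b) :
    (b : ℝ) * ((m+1).choose b : ℝ) = (m.choose (b-1) : ℝ) * ((m:ℝ)+1) := by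
  have h := Nat.add_one_mul_choose_eq m (b-1)
  rw [Nat.sub_add_cancel hb1] at h
  have h2 : (((m+1) * m.choose (b-1) : ℕ) : ℝ) = (((m+1).choose b * b : ℕ) : ℝ) := by
    exact_mod_cast congrArg (Nat.cast (R := ℝ)) h
  push_cast at h2
  linear_combination -h2

lemma choose_id2 (m b : ℕ) (hb1 : 1 ≤ b) :
    ((m:ℝ) + 1 - b) * ((m+1).choose b : ℝ) = ((m:ℝ)+1) * (m.choose b : ℝ) := by
  have hP : (((m+1).choose b : ℕ) : ℝ) = (m.choose (b-1) : ℝ) + (m.choose b : ℝ) := by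
    have := Nat.choose_succ_succ m (b-1)
    rw [Nat.succ_eq_add_one, Nat.succ_eq_add_one, Nat.sub_add_cancel hb1] at this
    push_cast [this]
    ring
  have hF := choose_id1 m b hb1
  linear_combination ((m:ℝ)+1) * hP - hF


lemma gaussianPDFReal_product (μ y : ℝ) (v1 v2 : ℝ≥0) (h1 : v1 ≠ 0) (h2 : v2 ≠ 0) (x : ℝ) :
    gaussianPDFReal μ v1 x * gaussianPDFReal x v2 y =
      gaussianPDFReal μ (v1 + v2) y *
        gaussianPDFReal (((v2 : ℝ) * μ + (v1 : ℝ) * y) / ((v1 : ℝ) + (v2 : ℝ)))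
          (NNReal.mk ((v1 : ℝ) * v2 / ((v1 : ℝ) + (v2 : ℝ))) (by positivity)) x := by
  have hv1 : (0:ℝ) < v1 := lt_of_le_of_ne v1.coe_nonneg (by exact_mod_cast (Ne.symm h1))
  have hv2 : (0:ℝ) < v2 := lt_of_le_of_ne v2.coe_nonneg (by exact_mod_cast (Ne.symm h2))
  have hs : (0:ℝ) < (v1:ℝ) + v2 := by linarith
  unfold gaussianPDFReal
  rw [mul_mul_mul_comm, ← Real.exp_add, mul_mul_mul_comm, ← Real.exp_add]
  have hcoe1 : ((v1 + v2 : ℝ≥0) : ℝ) = (v1:ℝ) + (v2:ℝ) := by push_cast; ring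
  have hcoe2 : ((NNReal.mk ((v1 : ℝ) * v2 / ((v1 : ℝ) + (v2 : ℝ))) (by positivity) : ℝ≥0) : ℝ)
      = (v1:ℝ) * v2 / ((v1:ℝ) + v2) := rfl
  congr 1
  · rw [← mul_inv, ← mul_inv, ← Real.sqrt_mul (by positivity), ← Real.sqrt_mul (by positivity),
      hcoe1]
    simp only [NNReal.coe_mk]
    congr 2
    field_simp
  · rw [Real.exp_eq_exp, hcoe1]
    simp only [NNReal.coe_mk]
    field_simp
    ring

lemma lintegral_gaussianPDF_mul (μ y : ℝ) (v1 v2 : ℝ≥0) (h1 : v1 ≠ 0) (h2 : v2 ≠ 0) :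
    ∫⁻ x, gaussianPDF μ v1 x * gaussianPDF x v2 y = gaussianPDF μ (v1 + v2) y := by
  have hw : (NNReal.mk ((v1 : ℝ) * v2 / ((v1 : ℝ) + (v2 : ℝ))) (by positivity) : ℝ≥0) ≠ 0 := by
    have hv1 : (0:ℝ) < v1 := lt_of_le_of_ne v1.coe_nonneg (by exact_mod_cast (Ne.symm h1))
    have hv2 : (0:ℝ) < v2 := lt_of_le_of_ne v2.coe_nonneg (by exact_mod_cast (Ne.symm h2))
    intro hc
    have := congrArg (NNReal.toReal) hc
    simp only [NNReal.coe_mk, NNReal.coe_zero] at this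
    have : (0:ℝ) < (v1:ℝ) * v2 / ((v1:ℝ) + v2) := by positivity
    linarith
  calc ∫⁻ x, gaussianPDF μ v1 x * gaussianPDF x v2 y
      = ∫⁻ x, ENNReal.ofReal (gaussianPDFReal μ (v1+v2) y) *
          ENNReal.ofReal (gaussianPDFReal (((v2 : ℝ) * μ + (v1 : ℝ) * y) / ((v1 : ℝ) + (v2 : ℝ)))
            (NNReal.mk ((v1 : ℝ) * v2 / ((v1 : ℝ) + (v2 : ℝ))) (by positivity)) x) := by
        congr 1 with x
        rw [gaussianPDF, gaussianPDF, ← ENNReal.ofReal_mul (gaussianPDFReal_nonneg _ _ _),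
          gaussianPDFReal_product μ y v1 v2 h1 h2 x,
          ENNReal.ofReal_mul (gaussianPDFReal_nonneg _ _ _)]
    _ = ENNReal.ofReal (gaussianPDFReal μ (v1+v2) y) * 1 := by
        rw [lintegral_const_mul _ ((measurable_gaussianPDFReal _ _).ennreal_ofReal),
          lintegral_gaussianPDFReal_eq_one _ hw]
    _ = gaussianPDF μ (v1+v2) y := by rw [mul_one, gaussianPDF]

lemma measurable_gaussianReal_apply (v : ℝ≥0) {E : Set ℝ} (hE : MeasurableSet E) :
    Measurable fun t : ℝ => gaussianReal t v E := by
  by_cases hv : v = 0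
  · subst hv
    simp only [gaussianReal_zero_var]
    have : (fun t : ℝ => Measure.dirac t E) = fun t => E.indicator (fun _ => (1:ℝ≥0∞)) t := by
      ext t; rw [Measure.dirac_apply' t hE]; rfl
    rw [this]
    exact measurable_const.indicator hE
  · have hrw : (fun t : ℝ => gaussianReal t v E)
        = fun t => ∫⁻ y, E.indicator (fun y => gaussianPDF t v y) y := by
      ext t
      rw [gaussianReal_apply t hv E, ← lintegral_indicator hE]
    rw [hrw]
    apply Measurable.lintegral_prod_right (f := fun t y => E.indicator (fun y => gaussianPDF t v y) y)
    have hjoint : Measurable fun p : ℝ × ℝ => gaussianPDF p.1 v p.2 := by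
      apply Measurable.ennreal_ofReal
      unfold gaussianPDFReal
      fun_prop
    have : Function.uncurry (fun t y => E.indicator (fun y => gaussianPDF t v y) y)
        = (Prod.snd ⁻¹' E).indicator (fun p : ℝ × ℝ => gaussianPDF p.1 v p.2) := by
      ext p
      rcases p with ⟨t, y⟩
      by_cases hy : y ∈ E <;>
        simp [Function.uncurry, Set.indicator, hy]
    rw [this]
    exact hjoint.indicator (measurable_snd hE)

lemma gaussianReal_conv (μ : ℝ) (v1 v2 : ℝ≥0) {E : Set ℝ} (hE : MeasurableSet E) :
    ∫⁻ x, gaussianReal x v2 E ∂(gaussianReal μ v1) = gaussianReal μ (v1 + v2) E := by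
  by_cases h2 : v2 = 0
  · subst h2
    simp only [gaussianReal_zero_var, add_zero]
    have : (fun x : ℝ => Measure.dirac x E) = fun x => E.indicator (1 : ℝ → ℝ≥0∞) x := by
      ext x; rw [Measure.dirac_apply' x hE]
    rw [this, lintegral_indicator_one hE]
  by_cases h1 : v1 = 0
  · subst h1
    simp only [gaussianReal_zero_var, zero_add]
    exact lintegral_dirac' μ (measurable_gaussianReal_apply v2 hE)
  · rw [gaussianReal_of_var_ne_zero μ h1,
      lintegral_withDensity_eq_lintegral_mul _ (measurable_gaussianPDF _ _)
        (measurable_gaussianReal_apply v2 hE)]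
    calc ∫⁻ x, (gaussianPDF μ v1 * fun t => gaussianReal t v2 E) x
        = ∫⁻ x, ∫⁻ y in E, gaussianPDF μ v1 x * gaussianPDF x v2 y := by
          congr 1 with x
          simp only [Pi.mul_apply]
          rw [gaussianReal_apply x h2 E, ← lintegral_const_mul _ (measurable_gaussianPDF _ _)]
      _ = ∫⁻ y in E, ∫⁻ x, gaussianPDF μ v1 x * gaussianPDF x v2 y := by
          apply lintegral_lintegral_swap
          apply Measurable.aemeasurable
          apply Measurable.mul (f := fun p : ℝ × ℝ => gaussianPDF μ v1 p.1)
            (g := fun p : ℝ × ℝ => gaussianPDF p.1 v2 p.2)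
          · exact (measurable_gaussianPDF μ v1).comp measurable_fst
          · have : Measurable fun p : ℝ × ℝ => gaussianPDF p.1 v2 p.2 := by
              apply Measurable.ennreal_ofReal
              unfold gaussianPDFReal
              fun_prop
            exact this
      _ = ∫⁻ y in E, gaussianPDF μ (v1 + v2) y := by
          congr 1 with y
          exact lintegral_gaussianPDF_mul μ y v1 v2 h1 h2
      _ = gaussianReal μ (v1 + v2) E := (gaussianReal_apply μ (by simp [h1]) E).symm

lemma lintegral_gaussianReal_affine (l d μ' : ℝ) (v1 v2 : ℝ≥0) {E : Set ℝ}
    (hE : MeasurableSet E) :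
    ∫⁻ x, gaussianReal (l * x + d) v2 E ∂(gaussianReal μ' v1)
      = gaussianReal (l * μ' + d) (⟨l^2, sq_nonneg l⟩ * v1 + v2) E := by
  have hcomp : (fun x : ℝ => l * x + d) = (· + d) ∘ (fun x => l * x) := rfl
  have hmap : (gaussianReal μ' v1).map (fun x : ℝ => l * x + d)
      = gaussianReal (l * μ' + d) (⟨l^2, sq_nonneg l⟩ * v1) := by
    rw [hcomp, ← Measure.map_map (measurable_add_const d) (measurable_const_mul l),
      gaussianReal_map_const_mul, gaussianReal_map_add_const]
    rfl
  rw [← lintegral_map (measurable_gaussianReal_apply v2 hE)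
      ((measurable_const_mul l).add_const d), hmap, gaussianReal_conv _ _ _ hE]

lemma layer_cake_bound {P Q : Measure ℝ} [IsProbabilityMeasure P] [IsProbabilityMeasure Q]
    (β δ S : ℝ) (hS0 : 0 ≤ S)
    (f : ℝ → ℝ) (hf : Measurable f) (hf0 : ∀ x, 0 ≤ f x) (hf1 : ∀ x, f x ≤ 1)
    (hS : ∀ F : Set ℝ, MeasurableSet F → β * (P F).toReal - δ * (Q F).toReal ≤ S) :
    β * (∫⁻ x, ENNReal.ofReal (f x) ∂P).toReal
      - δ * (∫⁻ x, ENNReal.ofReal (f x) ∂Q).toReal ≤ S := by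
  have hanti : ∀ (μ : Measure ℝ), Antitone fun t : ℝ => μ {a | t < f a} :=
    fun μ s t hst => measure_mono (fun a ha => lt_of_le_of_lt hst ha)
  have key : ∀ (μ : Measure ℝ) [IsProbabilityMeasure μ],
      (∫⁻ x, ENNReal.ofReal (f x) ∂μ).toReal
        = ∫ t in Set.Ioi (0:ℝ), (μ {a | t < f a}).toReal := by
    intro μ _
    rw [lintegral_eq_lintegral_meas_lt μ (ae_of_all _ hf0) hf.aemeasurable]
    rw [MeasureTheory.integral_toReal]
    · exact ((hanti μ).measurable).aemeasurable
    · exact ae_of_all _ (fun t => lt_of_le_of_lt (prob_le_one) ENNReal.one_lt_top)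
  rw [key P, key Q]
  -- integrability
  have hmeas : ∀ (μ : Measure ℝ), Measurable fun t => (μ {a | t < f a}).toReal := by
    intro μ
    exact ((hanti μ).measurable).ennreal_toReal
  have hint : ∀ (μ : Measure ℝ) [IsProbabilityMeasure μ],
      IntegrableOn (fun t => (μ {a | t < f a}).toReal) (Set.Ioi (0:ℝ)) := by
    intro μ _
    apply Integrable.mono' (g := (Set.Ioc (0:ℝ) 1).indicator (fun _ => (1:ℝ)))
    · rw [integrable_indicator_iff measurableSet_Ioc]
      exact integrableOn_const (by simp)
    · exact ((hmeas μ).aestronglyMeasurable).restrict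
    · rw [ae_restrict_iff' measurableSet_Ioi]
      apply ae_of_all
      intro t ht
      by_cases ht1 : t ≤ 1
      · rw [Set.indicator_of_mem (Set.mem_Ioc.mpr ⟨ht, ht1⟩)]
        rw [Real.norm_eq_abs, abs_of_nonneg ENNReal.toReal_nonneg]
        exact ENNReal.toReal_le_of_le_ofReal zero_le_one (by simpa using prob_le_one)
      · have : {a | t < f a} = ∅ := by
          ext a; simp only [Set.mem_setOf_eq, Set.mem_empty_iff_false, iff_false, not_lt]
          exact (hf1 a).trans (le_of_not_ge ht1)
        rw [Set.indicator_of_notMem (by simp [Set.mem_Ioc]; intro h; linarith), this]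
        simp
  rw [← integral_const_mul, ← integral_const_mul, ← integral_sub ((hint P).const_mul β) ((hint Q).const_mul δ)]
  have hbound : ∫ t in Set.Ioi (0:ℝ),
      (β * (P {a | t < f a}).toReal - δ * (Q {a | t < f a}).toReal)
      ≤ ∫ t in Set.Ioi (0:ℝ), (Set.Ioc (0:ℝ) 1).indicator (fun _ => S) t := by
    apply integral_mono_ae (((hint P).const_mul β).sub ((hint Q).const_mul δ))
    · rw [integrable_indicator_iff measurableSet_Ioc]
      exact integrableOn_const (by simp)
    · rw [Filter.EventuallyLE, ae_restrict_iff' measurableSet_Ioi]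
      apply ae_of_all
      intro t ht
      simp only [Pi.sub_apply]
      by_cases ht1 : t ≤ 1
      · rw [Set.indicator_of_mem (Set.mem_Ioc.mpr ⟨ht, ht1⟩)]
        exact hS _ (hf measurableSet_Ioi)
      · have hempty : {a | t < f a} = ∅ := by
          ext a; simp only [Set.mem_setOf_eq, Set.mem_empty_iff_false, iff_false, not_lt]
          exact (hf1 a).trans (le_of_not_ge ht1)
        rw [Set.indicator_of_notMem (by simp [Set.mem_Ioc]; intro h; linarith), hempty]
        simp
  refine hbound.trans ?_
  rw [integral_indicator measurableSet_Ioc]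
  rw [Measure.restrict_restrict measurableSet_Ioc]
  have : Set.Ioc (0:ℝ) 1 ∩ Set.Ioi 0 = Set.Ioc 0 1 := by
    ext t; simp only [Set.mem_inter_iff, Set.mem_Ioc, Set.mem_Ioi, and_iff_left_iff_imp]
    exact fun h => h.1
  rw [this, setIntegral_const]
  simp

lemma core_bound (σ : ℝ) (β δ : ℝ) (μ₀ μ c : ℝ) (hc : |c| ≤ 2) (S : ℝ) (hS0 : 0 ≤ S)
    (hS : ∀ F : Set ℝ, MeasurableSet F →
      β * ((gaussianReal μ₀ ⟨σ^2, sq_nonneg σ⟩ F).toReal)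
        - δ * ((gaussianReal (μ₀+2) ⟨σ^2, sq_nonneg σ⟩ F).toReal) ≤ S)
    {E : Set ℝ} (hE : MeasurableSet E) :
    β * ((gaussianReal μ ⟨σ^2, sq_nonneg σ⟩ E).toReal)
      - δ * ((gaussianReal (μ+c) ⟨σ^2, sq_nonneg σ⟩ E).toReal) ≤ S := by
  set V : ℝ≥0 := ⟨σ^2, sq_nonneg σ⟩ with hV
  set l : ℝ := c/2 with hl
  have hl2 : l^2 ≤ 1 := by
    rw [hl]
    have : |c/2| ≤ 1 := by rw [abs_div]; simp; linarith [hc, abs_nonneg c]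
    calc (c/2)^2 = |c/2|^2 := (sq_abs _).symm
    _ ≤ 1 := by nlinarith [abs_nonneg (c/2)]
  set d : ℝ := μ - l * μ₀ with hd
  set v2 : ℝ≥0 := ⟨(1 - l^2) * σ^2, mul_nonneg (by linarith) (sq_nonneg σ)⟩ with hv2
  have hVsum : (⟨l ^ 2, sq_nonneg l⟩ * V + v2 : ℝ≥0) = V := by
    apply NNReal.coe_injective
    change l ^ 2 * σ ^ 2 + (1 - l ^ 2) * σ ^ 2 = σ ^ 2
    ring
  -- the transported function
  set f : ℝ → ℝ := fun x => (gaussianReal (l * x + d) v2 E).toReal with hfdef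
  have hf : Measurable f := by
    apply Measurable.ennreal_toReal
    exact (measurable_gaussianReal_apply v2 hE).comp ((measurable_const_mul l).add_const d)
  have hf0 : ∀ x, 0 ≤ f x := fun x => ENNReal.toReal_nonneg
  have hf1 : ∀ x, f x ≤ 1 := by
    intro x
    exact ENNReal.toReal_le_of_le_ofReal zero_le_one (by simpa using prob_le_one)
  have hofReal : ∀ x, ENNReal.ofReal (f x) = gaussianReal (l * x + d) v2 E := by
    intro x
    exact ENNReal.ofReal_toReal (measure_ne_top _ _)
  have hP : ∫⁻ x, ENNReal.ofReal (f x) ∂(gaussianReal μ₀ V) = gaussianReal μ V E := by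
    simp_rw [hofReal]
    rw [lintegral_gaussianReal_affine l d μ₀ V v2 hE, hVsum]
    congr 1
    rw [hd]; ring
  have hQ : ∫⁻ x, ENNReal.ofReal (f x) ∂(gaussianReal (μ₀+2) V) = gaussianReal (μ+c) V E := by
    simp_rw [hofReal]
    rw [lintegral_gaussianReal_affine l d (μ₀+2) V v2 hE, hVsum]
    congr 1
    rw [hd, hl]; ring
  have := layer_cake_bound (P := gaussianReal μ₀ V) (Q := gaussianReal (μ₀+2) V)
    β δ S hS0 f hf hf0 hf1 hS
  rwa [hP, hQ] at this

instance hsNonempty {X : Type*} [MeasurableSpace X] : Nonempty {E : Set X // MeasurableSet E} :=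
  ⟨⟨∅, MeasurableSet.empty⟩⟩

lemma hsDiv_le {X : Type*} [MeasurableSpace X] (α : ℝ) (P Q : Measure X) (B : ℝ)
    (h : ∀ E : Set X, MeasurableSet E → (P E).toReal - α * (Q E).toReal ≤ B) :
    hsDiv α P Q ≤ B :=
  ciSup_le (fun E => h E.1 E.2)

lemma le_hsDiv {X : Type*} [MeasurableSpace X] (α : ℝ) (hα : 0 ≤ α) (P Q : Measure X)
    [IsFiniteMeasure P] {E : Set X} (hE : MeasurableSet E) :
    (P E).toReal - α * (Q E).toReal ≤ hsDiv α P Q := by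
  apply le_ciSup (f := fun E : {E : Set X // MeasurableSet E} =>
    ((P E.1).toReal - α * (Q E.1).toReal)) ?_ ⟨E, hE⟩
  refine ⟨(P Set.univ).toReal, ?_⟩
  rintro x ⟨⟨F, hF⟩, rfl⟩
  simp only
  have h1 : (P F).toReal ≤ (P Set.univ).toReal :=
    ENNReal.toReal_mono (measure_ne_top _ _) (measure_mono (Set.subset_univ F))
  have h2 : 0 ≤ α * (Q F).toReal := mul_nonneg hα ENNReal.toReal_nonneg
  linarith

lemma hsDiv_nonneg {X : Type*} [MeasurableSpace X] (α : ℝ) (hα : 0 ≤ α) (P Q : Measure X)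
    [IsFiniteMeasure P] : 0 ≤ hsDiv α P Q := by
  have := le_hsDiv α hα P Q MeasurableSet.empty
  simpa using this

lemma sum_erase_reindex {M : Type*} [AddCommMonoid M] {m b : ℕ} (hb : 1 ≤ b)
    (F : Finset (Fin m) → M) :
    ∑ S ∈ Finset.powersetCard b (Finset.univ : Finset (Fin m)), ∑ j ∈ S, F (S.erase j)
      = ∑ S ∈ Finset.powersetCard (b-1) (Finset.univ : Finset (Fin m)),
          ∑ _j ∈ Finset.univ \ S, F S := by
  classical
  rw [Finset.sum_sigma', Finset.sum_sigma']
  refine Finset.sum_nbij' (fun p => ⟨p.1.erase p.2, p.2⟩) (fun p => ⟨insert p.2 p.1, p.2⟩)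
    ?_ ?_ ?_ ?_ ?_
  · rintro ⟨S, j⟩ hp
    simp only [Finset.mem_sigma, Finset.mem_powersetCard_univ] at hp ⊢
    refine ⟨by rw [Finset.card_erase_of_mem hp.2, hp.1], ?_⟩
    simp [Finset.mem_sdiff]
  · rintro ⟨S, j⟩ hp
    simp only [Finset.mem_sigma, Finset.mem_powersetCard_univ, Finset.mem_sdiff,
      Finset.mem_univ, true_and] at hp ⊢
    refine ⟨?_, Finset.mem_insert_self _ _⟩
    rw [Finset.card_insert_of_notMem hp.2, hp.1]
    omega
  · rintro ⟨S, j⟩ hp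
    simp only [Finset.mem_sigma, Finset.mem_powersetCard_univ] at hp
    exact congrArg (fun T => (⟨T, j⟩ : Σ _ : Finset (Fin m), Fin m)) (Finset.insert_erase hp.2)
  · rintro ⟨S, j⟩ hp
    simp only [Finset.mem_sigma, Finset.mem_powersetCard_univ, Finset.mem_sdiff,
      Finset.mem_univ, true_and] at hp
    exact congrArg (fun T => (⟨T, j⟩ : Σ _ : Finset (Fin m), Fin m)) (Finset.erase_insert hp.2)
  · rintro ⟨S, j⟩ hp
    rfl

lemma part1 (σ : ℝ) (hσ : 0 < σ) (m b : ℕ) (hb1 : 1 ≤ b) (hbm : b ≤ m)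
    (γ : ℝ) (hγ : γ = (b : ℝ) / (m + 1))
    (D : Fin m → ℝ) (D' : Fin (m + 1) → ℝ)
    (hD : ∀ j, D j ∈ Set.Icc (-1 : ℝ) 1) (hD' : ∀ j, D' j ∈ Set.Icc (-1 : ℝ) 1)
    (i : Fin (m+1)) (hi : ∀ j : Fin m, D j = D' (i.succAbove j))
    (α : ℝ) (hα : 0 ≤ α) :
    hsDiv α (worGauss σ b D) (worGauss σ b D') ≤
      hsDiv α (gaussianReal (-(b : ℝ)) ⟨σ ^ 2, sq_nonneg σ⟩)
        (ENNReal.ofReal (1 - γ) • gaussianReal (-(b : ℝ)) ⟨σ ^ 2, sq_nonneg σ⟩ +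
          ENNReal.ofReal γ • gaussianReal (2 - (b : ℝ)) ⟨σ ^ 2, sq_nonneg σ⟩) := by
  have hγ0 : 0 ≤ γ := by rw [hγ]; positivity
  have hγ1 : γ < 1 := by
    rw [hγ, div_lt_one (by positivity)]
    push_cast
    have : (b:ℝ) ≤ m := by exact_mod_cast hbm
    linarith
  set V : ℝ≥0 := ⟨σ^2, sq_nonneg σ⟩ with hV
  set G0 := gaussianReal (-(b:ℝ)) V with hG0
  set G2 := gaussianReal (2-(b:ℝ)) V with hG2
  set Gmix := ENNReal.ofReal (1-γ) • G0 + ENNReal.ofReal γ • G2 with hGmixdef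
  set S := hsDiv α G0 Gmix with hSdef
  have hS0 : 0 ≤ S := hsDiv_nonneg α hα _ _
  have hmixF : ∀ F : Set ℝ, (Gmix F).toReal = (1-γ) * (G0 F).toReal + γ * (G2 F).toReal := by
    intro F
    rw [hGmixdef]
    simp only [Measure.coe_add, Pi.add_apply, Measure.smul_apply, smul_eq_mul]
    rw [ENNReal.toReal_add (by finiteness) (by finiteness), ENNReal.toReal_mul,
      ENNReal.toReal_mul, ENNReal.toReal_ofReal (by linarith), ENNReal.toReal_ofReal hγ0]
  have hSF : ∀ F : Set ℝ, MeasurableSet F →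
      (1 - α*(1-γ)) * (G0 F).toReal - (α*γ) * (G2 F).toReal ≤ S := by
    intro F hF
    have h := le_hsDiv α hα G0 Gmix hF
    rw [hmixF] at h
    linarith [h]
  have hcore : ∀ (ν cc : ℝ), |cc| ≤ 2 → ∀ F : Set ℝ, MeasurableSet F →
      (1 - α*(1-γ)) * (gaussianReal ν V F).toReal
        - (α*γ) * (gaussianReal (ν+cc) V F).toReal ≤ S := by
    intro ν cc hcc F hF
    refine core_bound σ _ _ (-(b:ℝ)) ν cc hcc S hS0 ?_ hF
    intro F' hF'
    have h2 : -(b:ℝ) + 2 = 2 - (b:ℝ) := by ring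
    rw [h2]
    exact hSF F' hF'
  apply hsDiv_le
  intro E hE
  -- abbreviations
  set cb : ℝ := (m.choose b : ℝ) with hcb
  set c1 : ℝ := ((m+1).choose b : ℝ) with hc1
  have hcbpos : 0 < cb := by rw [hcb]; exact_mod_cast Nat.choose_pos hbm
  have hc1pos : 0 < c1 := by rw [hc1]; exact_mod_cast Nat.choose_pos (by omega : b ≤ m+1)
  have hbpos : (0:ℝ) < b := by exact_mod_cast hb1
  set g0 : Finset (Fin m) → ℝ := fun T => (gaussianReal (∑ j ∈ T, D j) V E).toReal with hg0
  set g1 : Finset (Fin m) → ℝ :=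
    fun T => (gaussianReal (D' i + ∑ j ∈ T, D j) V E).toReal with hg1
  set A := ∑ T ∈ Finset.powersetCard b (Finset.univ : Finset (Fin m)), g0 T with hA
  set B := ∑ T ∈ Finset.powersetCard (b-1) (Finset.univ : Finset (Fin m)), g1 T with hB
  -- P application
  have hP : (worGauss σ b D E).toReal = cb⁻¹ * A := by
    unfold worGauss
    rw [Measure.smul_apply, Measure.finset_sum_apply, smul_eq_mul, ENNReal.toReal_mul,
      ENNReal.toReal_inv, ENNReal.toReal_natCast,
      ENNReal.toReal_sum ?hf]
    exact fun _ _ => @measure_ne_top _ _ _ (@IsZeroOrProbabilityMeasure.toIsFiniteMeasure _ _ _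
      (@instIsZeroOrProbabilityMeasureOfIsProbabilityMeasure _ _ _
        (instIsProbabilityMeasureGaussianReal _ _))) _
  -- Q application
  have hQ : (worGauss σ b D' E).toReal = c1⁻¹ * (A + B) := by
    unfold worGauss
    rw [Measure.smul_apply, Measure.finset_sum_apply,
      sum_powersetCard_split m b hb1 i (fun T => gaussianReal (∑ k ∈ T, D' k) V E)]
    have hmean1 : ∀ T ∈ Finset.powersetCard b (Finset.univ : Finset (Fin m)),
        gaussianReal (∑ k ∈ T.map (i.succAboveEmb), D' k) V E
          = gaussianReal (∑ j ∈ T, D j) V E := by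
      intro T _
      have : (∑ k ∈ T.map (i.succAboveEmb), D' k) = ∑ j ∈ T, D j := by
        rw [Finset.sum_map]
        exact Finset.sum_congr rfl (fun j _ => ((hi j).symm))
      rw [this]
    have hmean2 : ∀ T ∈ Finset.powersetCard (b-1) (Finset.univ : Finset (Fin m)),
        gaussianReal (∑ k ∈ insert i (T.map (i.succAboveEmb)), D' k) V E
          = gaussianReal (D' i + ∑ j ∈ T, D j) V E := by
      intro T _
      have : (∑ k ∈ insert i (T.map (i.succAboveEmb)), D' k) = D' i + ∑ j ∈ T, D j := by
        rw [Finset.sum_insert (not_mem_map_succAboveEmb i T), Finset.sum_map]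
        congr 1
        exact Finset.sum_congr rfl (fun j _ => ((hi j).symm))
      rw [this]
    rw [Finset.sum_congr rfl hmean1, Finset.sum_congr rfl hmean2, smul_eq_mul,
      ENNReal.toReal_mul, ENNReal.toReal_inv, ENNReal.toReal_natCast,
      ENNReal.toReal_add (ENNReal.sum_lt_top.mpr (fun _ _ => measure_lt_top _ _)).ne
        (ENNReal.sum_lt_top.mpr (fun _ _ => measure_lt_top _ _)).ne,
      ENNReal.toReal_sum (fun _ _ => measure_ne_top _ _),
      ENNReal.toReal_sum (fun _ _ => measure_ne_top _ _)]
  rw [hP, hQ]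
  set w : ℝ := (cb * b)⁻¹ with hw
  have hwpos : 0 < w := by rw [hw]; positivity
  -- key algebraic identity
  have hkey : cb⁻¹ * A - α * (c1⁻¹ * (A + B))
      = ∑ T ∈ Finset.powersetCard b (Finset.univ : Finset (Fin m)), ∑ j ∈ T,
          w * ((1 - α*(1-γ)) * g0 T
            - (α*γ) * (gaussianReal ((∑ k ∈ T, D k) + (D' i - D j)) V E).toReal) := by
    have hsplit : ∀ T ∈ Finset.powersetCard b (Finset.univ : Finset (Fin m)),
        (∑ j ∈ T, w * ((1 - α*(1-γ)) * g0 T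
            - (α*γ) * (gaussianReal ((∑ k ∈ T, D k) + (D' i - D j)) V E).toReal))
          = (b:ℝ) * (w * (1 - α*(1-γ)) * g0 T)
            - w * (α*γ) * ∑ j ∈ T, g1 (T.erase j) := by
      intro T hT
      rw [Finset.mem_powersetCard_univ] at hT
      have hmean : ∀ j ∈ T, (gaussianReal ((∑ k ∈ T, D k) + (D' i - D j)) V E).toReal
          = g1 (T.erase j) := by
        intro j hj
        rw [hg1]
        have : (∑ k ∈ T, D k) + (D' i - D j) = D' i + ∑ k ∈ T.erase j, D k := by
          rw [Finset.sum_erase_eq_sub hj]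
          ring
        rw [this]
      calc ∑ j ∈ T, w * ((1 - α*(1-γ)) * g0 T
            - (α*γ) * (gaussianReal ((∑ k ∈ T, D k) + (D' i - D j)) V E).toReal)
          = ∑ j ∈ T, (w * (1 - α*(1-γ)) * g0 T - w * (α*γ) * g1 (T.erase j)) := by
            refine Finset.sum_congr rfl (fun j hj => ?_)
            rw [hmean j hj]
            ring
        _ = (b:ℝ) * (w * (1 - α*(1-γ)) * g0 T) - w * (α*γ) * ∑ j ∈ T, g1 (T.erase j) := by
            rw [Finset.sum_sub_distrib, Finset.sum_const, hT, Finset.mul_sum, nsmul_eq_mul]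
    rw [Finset.sum_congr rfl hsplit, Finset.sum_sub_distrib, ← Finset.mul_sum, ← Finset.mul_sum,
      ← Finset.mul_sum, sum_erase_reindex hb1 g1]
    have hinner : ∀ T ∈ Finset.powersetCard (b-1) (Finset.univ : Finset (Fin m)),
        (∑ _j ∈ Finset.univ \ T, g1 T) = ((m:ℝ) - b + 1) * g1 T := by
      intro T hT
      rw [Finset.mem_powersetCard_univ] at hT
      rw [Finset.sum_const, Finset.card_sdiff_of_subset (Finset.subset_univ T), Finset.card_univ,
        Fintype.card_fin, hT, nsmul_eq_mul]
      congr 1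
      have : b - 1 ≤ m := by omega
      push_cast [Nat.cast_sub this, Nat.cast_sub hb1]
      ring
    rw [Finset.sum_congr rfl hinner, ← Finset.mul_sum, ← hA, ← hB]
    -- coefficient identities
    have h1γ : 0 < 1 - γ := by linarith
    have hwb : w * (b:ℝ) = cb⁻¹ := by
      rw [hw]; field_simp
    have hid : cb = (1-γ) * c1 := by
      have h2 := choose_id2 m b hb1
      rw [hγ]
      field_simp
      linear_combination -h2
    have hrel1 : c1⁻¹ = (1-γ) * (w * (b:ℝ)) := by
      rw [hwb, hid, mul_inv]
      field_simp
    have hrel2 : (1-γ) * (b:ℝ) = γ * ((m:ℝ) - b + 1) := by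
      rw [hγ]
      field_simp
      ring
    linear_combination (-(α*A) - α*B) * hrel1 + (-A) * hwb + (-(α*w*B)) * hrel2
  rw [hkey]
  -- bound each summand
  have hstep : ∀ T ∈ Finset.powersetCard b (Finset.univ : Finset (Fin m)), ∀ j ∈ T,
      w * ((1 - α*(1-γ)) * g0 T
        - (α*γ) * (gaussianReal ((∑ k ∈ T, D k) + (D' i - D j)) V E).toReal) ≤ w * S := by
    intro T _ j _
    apply mul_le_mul_of_nonneg_left _ hwpos.le
    have hcc : |D' i - D j| ≤ 2 := by
      have h1 := hD j
      have h2 := hD' i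
      simp only [Set.mem_Icc] at h1 h2
      rw [abs_le]
      constructor <;> linarith
    exact hcore (∑ k ∈ T, D k) (D' i - D j) hcc E hE
  calc ∑ T ∈ Finset.powersetCard b (Finset.univ : Finset (Fin m)), ∑ j ∈ T,
          w * ((1 - α*(1-γ)) * g0 T
            - (α*γ) * (gaussianReal ((∑ k ∈ T, D k) + (D' i - D j)) V E).toReal)
      ≤ ∑ T ∈ Finset.powersetCard b (Finset.univ : Finset (Fin m)), ∑ _j ∈ T, w * S := by
        refine Finset.sum_le_sum (fun T hT => Finset.sum_le_sum (fun j hj => ?_))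
        exact hstep T hT j hj
    _ = S := by
        have : ∀ T ∈ Finset.powersetCard b (Finset.univ : Finset (Fin m)),
            (∑ _j ∈ T, w * S) = (b:ℝ) * (w * S) := by
          intro T hT
          rw [Finset.mem_powersetCard_univ] at hT
          rw [Finset.sum_const, hT, nsmul_eq_mul]
        rw [Finset.sum_congr rfl this, Finset.sum_const, Finset.card_powersetCard,
          Finset.card_univ, Fintype.card_fin, nsmul_eq_mul, hw]
        rw [← hcb]
        field_simp

lemma worGauss_const (σ : ℝ) (m b : ℕ) (hbm : b ≤ m) :
    worGauss σ b (fun _ : Fin m => (-1 : ℝ)) = gaussianReal (-(b : ℝ)) ⟨σ ^ 2, sq_nonneg σ⟩ := by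
  have h : ∀ S ∈ Finset.powersetCard b (Finset.univ : Finset (Fin m)),
      gaussianReal (∑ i ∈ S, (fun _ : Fin m => (-1:ℝ)) i) ⟨σ^2, sq_nonneg σ⟩
        = gaussianReal (-(b:ℝ)) ⟨σ^2, sq_nonneg σ⟩ := by
    intro S hS
    rw [Finset.mem_powersetCard_univ] at hS
    congr 1
    rw [Finset.sum_const, hS, nsmul_eq_mul]
    ring
  unfold worGauss
  rw [Finset.sum_congr rfl h, Finset.sum_const, Finset.card_powersetCard, Finset.card_univ,
    Fintype.card_fin, ← Nat.cast_smul_eq_nsmul ℝ≥0∞, smul_smul,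
    ENNReal.inv_mul_cancel (by exact_mod_cast (Nat.choose_pos hbm).ne')
      (ENNReal.natCast_ne_top _), one_smul]

lemma worGauss_snoc (σ : ℝ) (m b : ℕ) (hb1 : 1 ≤ b) (hbm : b ≤ m) (γ : ℝ)
    (hγ : γ = (b : ℝ) / (m + 1)) :
    worGauss σ b (Fin.snoc (fun _ : Fin m => (-1 : ℝ)) 1) =
      ENNReal.ofReal (1 - γ) • gaussianReal (-(b : ℝ)) ⟨σ ^ 2, sq_nonneg σ⟩ +
        ENNReal.ofReal γ • gaussianReal (2 - (b : ℝ)) ⟨σ ^ 2, sq_nonneg σ⟩ := by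
  set V : ℝ≥0 := ⟨σ ^ 2, sq_nonneg σ⟩ with hV
  set D' : Fin (m+1) → ℝ := Fin.snoc (fun _ : Fin m => (-1 : ℝ)) 1 with hD'
  have hlast : D' (Fin.last m) = 1 := by simp [hD']
  have hcast : ∀ j : Fin m, D' ((Fin.last m).succAbove j) = -1 := by
    intro j
    rw [Fin.succAbove_last]
    simp [hD']
  unfold worGauss
  rw [sum_powersetCard_split m b hb1 (Fin.last m)
    (fun T => gaussianReal (∑ i ∈ T, D' i) V)]
  have hA : ∀ S ∈ Finset.powersetCard b (Finset.univ : Finset (Fin m)),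
      gaussianReal (∑ i ∈ S.map ((Fin.last m).succAboveEmb), D' i) V
        = gaussianReal (-(b:ℝ)) V := by
    intro S hS
    rw [Finset.mem_powersetCard_univ] at hS
    congr 1
    rw [Finset.sum_map]
    simp only [Fin.succAboveEmb_apply, hcast]
    rw [Finset.sum_const, hS, nsmul_eq_mul]
    ring
  have hB : ∀ S ∈ Finset.powersetCard (b-1) (Finset.univ : Finset (Fin m)),
      gaussianReal (∑ i ∈ insert (Fin.last m) (S.map ((Fin.last m).succAboveEmb)), D' i) V
        = gaussianReal (2 - (b:ℝ)) V := by
    intro S hS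
    rw [Finset.mem_powersetCard_univ] at hS
    congr 1
    rw [Finset.sum_insert (not_mem_map_succAboveEmb _ S), hlast, Finset.sum_map]
    simp only [Fin.succAboveEmb_apply, hcast]
    rw [Finset.sum_const, hS, nsmul_eq_mul]
    have : ((b-1 : ℕ) : ℝ) = (b : ℝ) - 1 := by
      push_cast [hb1]; ring
    rw [this]; ring
  rw [Finset.sum_congr rfl hA, Finset.sum_congr rfl hB, Finset.sum_const, Finset.sum_const,
    Finset.card_powersetCard, Finset.card_powersetCard, Finset.card_univ, Fintype.card_fin,
    ← Nat.cast_smul_eq_nsmul ℝ≥0∞, ← Nat.cast_smul_eq_nsmul ℝ≥0∞, smul_add, smul_smul, smul_smul]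
  have hXpos : (0:ℝ) < ((m+1).choose b : ℝ) := by
    exact_mod_cast Nat.choose_pos (by omega)
  have hc1 : ((((m+1)).choose b : ℝ≥0∞))⁻¹ * ((m.choose b : ℕ) : ℝ≥0∞) = ENNReal.ofReal (1 - γ) := by
    have e2 : 1 - γ = (m.choose b : ℝ) / (((m+1)).choose b : ℝ) := by
      rw [hγ, eq_div_iff hXpos.ne']
      have := choose_id2 m b hb1
      have hm1 : (0:ℝ) < (m:ℝ) + 1 := by positivity
      field_simp
      linear_combination this
    rw [e2, ENNReal.ofReal_div_of_pos hXpos, ENNReal.ofReal_natCast, ENNReal.ofReal_natCast,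
      ENNReal.div_eq_inv_mul]
  have hc2 : ((((m+1)).choose b : ℝ≥0∞))⁻¹ * ((m.choose (b-1) : ℕ) : ℝ≥0∞) = ENNReal.ofReal γ := by
    have e1 : γ = (m.choose (b-1) : ℝ) / (((m+1)).choose b : ℝ) := by
      rw [hγ, div_eq_div_iff (by positivity) hXpos.ne']
      linear_combination choose_id1 m b hb1
    rw [e1, ENNReal.ofReal_div_of_pos hXpos, ENNReal.ofReal_natCast, ENNReal.ofReal_natCast,
      ENNReal.div_eq_inv_mul]
  rw [hc1, hc2]

end Aux

/-- Dominating pair of datasets for the without-replacement subsampled Gaussian mechanism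
under the add relation (with `n = m + 1`, `1 ≤ b ≤ m`, `γ = b/n`): for datasets with entries
in `[−1,1]` where `D' ∈ [−1,1]^n` is obtained from `D ∈ [−1,1]^{n−1}` by inserting one entry,
`H_α(M_{n−1,b}(D) ‖ M_{n,b}(D')) ≤ H_α(N(−b,σ²) ‖ (1−γ)N(−b,σ²) + γN(2−b,σ²))` for all
`α ≥ 0`, and the bound is realized by `D = (−1,…,−1)`, `D' = (−1,…,−1,1)`. -/
theorem worGauss_dominating_pair_add (σ : ℝ) (hσ : 0 < σ) (m b : ℕ) (hb1 : 1 ≤ b) (hbm : b ≤ m)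
    (γ : ℝ) (hγ : γ = (b : ℝ) / (m + 1)) :
    (∀ (D : Fin m → ℝ) (D' : Fin (m + 1) → ℝ),
      (∀ j, D j ∈ Set.Icc (-1 : ℝ) 1) → (∀ j, D' j ∈ Set.Icc (-1 : ℝ) 1) →
      (∃ i : Fin (m + 1), ∀ j : Fin m, D j = D' (i.succAbove j)) →
      ∀ α : ℝ, 0 ≤ α →
        hsDiv α (worGauss σ b D) (worGauss σ b D') ≤
          hsDiv α (gaussianReal (-(b : ℝ)) ⟨σ ^ 2, sq_nonneg σ⟩)
            (ENNReal.ofReal (1 - γ) • gaussianReal (-(b : ℝ)) ⟨σ ^ 2, sq_nonneg σ⟩ +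
              ENNReal.ofReal γ • gaussianReal (2 - (b : ℝ)) ⟨σ ^ 2, sq_nonneg σ⟩)) ∧
    worGauss σ b (fun _ : Fin m => (-1 : ℝ)) = gaussianReal (-(b : ℝ)) ⟨σ ^ 2, sq_nonneg σ⟩ ∧
    worGauss σ b (Fin.snoc (fun _ : Fin m => (-1 : ℝ)) 1) =
      ENNReal.ofReal (1 - γ) • gaussianReal (-(b : ℝ)) ⟨σ ^ 2, sq_nonneg σ⟩ +
        ENNReal.ofReal γ • gaussianReal (2 - (b : ℝ)) ⟨σ ^ 2, sq_nonneg σ⟩ := by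
  refine ⟨?_, worGauss_const σ m b hbm, worGauss_snoc σ m b hb1 hbm γ hγ⟩
  intro D D' hD hD' hex α hα
  obtain ⟨i, hi⟩ := hex
  exact part1 σ hσ m b hb1 hbm γ hγ D D' hD hD' i hi α hα
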